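/- There exists an absolute constant K > 0 such that the following holds. Let α > 0, β ∈ (0,1), ε_∞ > 0, ε_F > 0, and let C, Ĉ ∈ ℂ^{M×M} be Hermitian matrices with min_i [C]_{i,i} ≥ α, min_i [Ĉ]_{i,i} ≥ α/2, such that for all i ≠ j both |[diag(C)^{−1/2} C diag(C)^{−1/2}]_{i,j}| ≤ 1 − β/2 and |[diag(Ĉ)^{−1/2} Ĉ diag(Ĉ)^{−1/2}]_{i,j}| ≤ 1 − β/2, and such that ‖Ĉ − C‖_∞ ≤ ε_∞ and ‖Ĉ − C‖_F ≤ ε_F. Then ‖P_arcsine(Ĉ) − P_arcsine(C)‖_F ≤ K·β^{−1/2}·(α^{−2}·‖C‖_F·ε_∞ + (α^{−2}·ε_∞ + α^{−1})·ε_F). -/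

import Mathlib

open MeasureTheory ProbabilityTheory Matrix
open scoped ComplexOrder

noncomputable section

/-- Entrywise maximum-modulus norm of a complex matrix. -/
def maxNorm {M : ℕ} (A : Matrix (Fin M) (Fin M) ℂ) : ℝ :=
  ⨆ i, ⨆ j, ‖A i j‖

/-- Frobenius norm of a complex matrix. -/
def frobNorm {M : ℕ} (A : Matrix (Fin M) (Fin M) ℂ) : ℝ :=
  Real.sqrt (∑ i, ∑ j, ‖A i j‖ ^ 2)

/-- Spectral (operator) norm of a complex matrix. -/
def specNorm {M : ℕ} (A : Matrix (Fin M) (Fin M) ℂ) : ℝ :=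
  ‖Matrix.toEuclideanCLM (𝕜 := ℂ) (n := Fin M) A‖

/-- diag(C)^{-1/2}: the diagonal matrix with entries [C]_{ii}^{-1/2}. -/
def dInvSqrt {M : ℕ} (C : Matrix (Fin M) (Fin M) ℂ) : Matrix (Fin M) (Fin M) ℂ :=
  Matrix.diagonal fun i => ((Real.sqrt (C i i).re)⁻¹ : ℂ)

/-- Bussgang gain A = sqrt(2/π)·diag(C)^{-1/2}. -/
def busA {M : ℕ} (C : Matrix (Fin M) (Fin M) ℂ) : Matrix (Fin M) (Fin M) ℂ :=
  (Real.sqrt (2 / Real.pi) : ℂ) • dInvSqrt C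

/-- The arcsine-law map P_arcsine(C) = (2/π)[arcsin(D^{-1/2} Re(C) D^{-1/2}) + i·arcsin(D^{-1/2} Im(C) D^{-1/2})]. -/
def arcsineMap {M : ℕ} (C : Matrix (Fin M) (Fin M) ℂ) : Matrix (Fin M) (Fin M) ℂ :=
  Matrix.of fun i j =>
    ((2 / Real.pi : ℝ) : ℂ) *
      ((Real.arcsin ((C i j).re / (Real.sqrt (C i i).re * Real.sqrt (C j j).re)) : ℝ) +
        Complex.I *
          ((Real.arcsin ((C i j).im / (Real.sqrt (C i i).re * Real.sqrt (C j j).re)) : ℝ) : ℂ))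

/-- one-bit sign quantizer: sign(x) = 1 if x ≥ 0, else -1. -/
def rsign (x : ℝ) : ℝ := if 0 ≤ x then 1 else -1

/-- one-bit complex quantization with dithers: sign(Re(y)+τ^R) + i·sign(Im(y)+τ^I). -/
def quant {M : ℕ} (yv : Fin M → ℂ) (tR tI : Fin M → ℝ) : Fin M → ℂ :=
  fun i => (rsign ((yv i).re + tR i) : ℂ) + Complex.I * (rsign ((yv i).im + tI i) : ℂ)

/-- dithered covariance estimator Ĉ = ½ C̃ + ½ C̃ᴴ with C̃ = (λ²/N) Σ r_n r̃_nᴴ. -/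
def ditherEst {M N : ℕ} (lam : ℝ) (r rt : Fin N → Fin M → ℂ) : Matrix (Fin M) (Fin M) ℂ :=
  ((1 : ℂ)/2) • (Matrix.of (fun i j => ((lam ^ 2 / N : ℝ) : ℂ) * ∑ n, r n i * (starRingEnd ℂ) (rt n j))
    + (Matrix.of (fun i j => ((lam ^ 2 / N : ℝ) : ℂ) * ∑ n, r n i * (starRingEnd ℂ) (rt n j)))ᴴ)

/-- the uniform probability measure on [-λ, λ]. -/
def unifIcc (lam : ℝ) : Measure ℝ :=
  (ENNReal.ofReal (2 * lam))⁻¹ • (volume.restrict (Set.Icc (-lam) lam))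

/-- S-subgaussian coordinates: (E|Re(y)_j|^p)^{1/p}, (E|Im(y)_j|^p)^{1/p} ≤ S √p ‖C_y‖_∞^{1/2} for p ≥ 2. -/
def SubgaussianCoords {Ω : Type} [MeasureSpace Ω] {M : ℕ} (S : ℝ)
    (y : Ω → Fin M → ℂ) (Cy : Matrix (Fin M) (Fin M) ℂ) : Prop :=
  ∀ (p : ℝ), 2 ≤ p → ∀ j : Fin M,
    (∫ ω, |(y ω j).re| ^ p) ^ (1/p) ≤ S * Real.sqrt p * Real.sqrt (maxNorm Cy) ∧
    (∫ ω, |(y ω j).im| ^ p) ^ (1/p) ≤ S * Real.sqrt p * Real.sqrt (maxNorm Cy)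


lemma arcsin_lip {β a b : ℝ} (hβ0 : 0 < β) (hβ1 : β < 1)
    (ha : |a| ≤ 1 - β/2) (hb : |b| ≤ 1 - β/2) :
    |Real.arcsin a - Real.arcsin b| ≤ (2 / Real.sqrt β) * |a - b| := by
  have hc1 : 1 - β/2 < 1 := by linarith
  have hc0 : 0 < 1 - β/2 := by linarith
  set s : Set ℝ := Set.Icc (-(1 - β/2)) (1 - β/2) with hs
  have hderiv : ∀ x ∈ s, HasDerivWithinAt Real.arcsin (1 / Real.sqrt (1 - x ^ 2)) s x := by
    intro x hx
    have hx' : |x| ≤ 1 - β/2 := abs_le.2 ⟨hx.1, hx.2⟩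
    have h1 : x ≠ -1 := by
      intro h; rw [h] at hx'; simp at hx'; linarith
    have h2 : x ≠ 1 := by
      intro h; rw [h] at hx'; simp at hx'; linarith
    exact (Real.hasDerivAt_arcsin h1 h2).hasDerivWithinAt
  have hbound : ∀ x ∈ s, ‖1 / Real.sqrt (1 - x ^ 2)‖ ≤ 2 / Real.sqrt β := by
    intro x hx
    have hx' : |x| ≤ 1 - β/2 := abs_le.2 ⟨hx.1, hx.2⟩
    have hx2 : x ^ 2 ≤ (1 - β/2) ^ 2 := by
      rw [← sq_abs]; exact pow_le_pow_left₀ (abs_nonneg x) hx' 2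
    have hkey : β/2 ≤ 1 - x ^ 2 := by nlinarith
    have hsq : Real.sqrt β / 2 ≤ Real.sqrt (1 - x ^ 2) := by
      rw [Real.le_sqrt (by positivity) (by linarith)]
      rw [div_pow, Real.sq_sqrt hβ0.le]
      nlinarith
    have h0 : 0 < Real.sqrt β / 2 := by positivity
    rw [Real.norm_eq_abs, abs_of_nonneg (by positivity)]
    rw [div_le_div_iff₀ (lt_of_lt_of_le h0 hsq) (by positivity)]
    calc 1 * Real.sqrt β = (Real.sqrt β / 2) * 2 := by ring
    _ ≤ Real.sqrt (1 - x ^ 2) * 2 := by nlinarith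
    _ = 2 * Real.sqrt (1 - x ^ 2) := by ring
  have hconv : Convex ℝ s := convex_Icc _ _
  have hmem_a : a ∈ s := ⟨(abs_le.1 ha).1, (abs_le.1 ha).2⟩
  have hmem_b : b ∈ s := ⟨(abs_le.1 hb).1, (abs_le.1 hb).2⟩
  have h := hconv.norm_image_sub_le_of_norm_hasDerivWithin_le hderiv hbound hmem_b hmem_a
  simpa [Real.norm_eq_abs] using h


lemma sqrt_diff {α ε r a : ℝ} (hα : 0 < α) (ha0 : 0 ≤ a) (hr : α ≤ r) (har : |a - r| ≤ ε) :
    |Real.sqrt a - Real.sqrt r| ≤ ε / Real.sqrt α := by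
  have hR : Real.sqrt α ≤ Real.sqrt r := Real.sqrt_le_sqrt hr
  have hR0 : 0 < Real.sqrt α := Real.sqrt_pos.2 hα
  have h2 : 0 ≤ Real.sqrt a := Real.sqrt_nonneg a
  have hsum : Real.sqrt α ≤ Real.sqrt a + Real.sqrt r := by linarith
  have h3 : Real.sqrt a * Real.sqrt a = a := Real.mul_self_sqrt ha0
  have h4 : Real.sqrt r * Real.sqrt r = r := Real.mul_self_sqrt (le_trans hα.le hr)
  rw [le_div_iff₀ hR0]
  calc |Real.sqrt a - Real.sqrt r| * Real.sqrt α
      ≤ |Real.sqrt a - Real.sqrt r| * (Real.sqrt a + Real.sqrt r) := by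
        have := abs_nonneg (Real.sqrt a - Real.sqrt r)
        nlinarith
  _ = |(Real.sqrt a - Real.sqrt r) * (Real.sqrt a + Real.sqrt r)| := by
        rw [abs_mul, abs_of_nonneg (by linarith : (0:ℝ) ≤ Real.sqrt a + Real.sqrt r)]
  _ = |a - r| := by rw [show (Real.sqrt a - Real.sqrt r) * (Real.sqrt a + Real.sqrt r) = a - r by nlinarith]
  _ ≤ ε := har

lemma ratio_diff {α ε γ δ : ℝ} {a b r s u' u : ℝ}
    (hα : 0 < α) (ha : α/2 ≤ a) (hb : α/2 ≤ b) (hr : α ≤ r) (hs : α ≤ s)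
    (har : |a - r| ≤ ε) (hbs : |b - s| ≤ ε)
    (hu : |u' - u| ≤ δ) (huγ : |u| ≤ γ) (hε : 0 ≤ ε) :
    |u' / (Real.sqrt a * Real.sqrt b) - u / (Real.sqrt r * Real.sqrt s)|
      ≤ 2/α * δ + 4*ε/α^2 * γ := by
  have hδ : 0 ≤ δ := le_trans (abs_nonneg _) hu
  have hγ : 0 ≤ γ := le_trans (abs_nonneg _) huγ
  set A := Real.sqrt a with hA'
  set B := Real.sqrt b with hB'
  set R := Real.sqrt r with hR'
  set S := Real.sqrt s with hS'
  have hα2 : (0:ℝ) < α/2 := by linarith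
  have hA : Real.sqrt (α/2) ≤ A := Real.sqrt_le_sqrt ha
  have hB : Real.sqrt (α/2) ≤ B := Real.sqrt_le_sqrt hb
  have hR : Real.sqrt α ≤ R := Real.sqrt_le_sqrt hr
  have hS : Real.sqrt α ≤ S := Real.sqrt_le_sqrt hs
  have hq0 : 0 < Real.sqrt (α/2) := Real.sqrt_pos.2 hα2
  have hp0 : 0 < Real.sqrt α := Real.sqrt_pos.2 hα
  have hA0 : 0 < A := lt_of_lt_of_le hq0 hA
  have hB0 : 0 < B := lt_of_lt_of_le hq0 hB
  have hR0 : 0 < R := lt_of_lt_of_le hp0 hR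
  have hS0 : 0 < S := lt_of_lt_of_le hp0 hS
  have hAB : α/2 ≤ A * B := by
    calc α/2 = Real.sqrt (α/2) * Real.sqrt (α/2) := (Real.mul_self_sqrt hα2.le).symm
    _ ≤ A * B := mul_le_mul hA hB hq0.le hA0.le
  have hRS : α ≤ R * S := by
    calc α = Real.sqrt α * Real.sqrt α := (Real.mul_self_sqrt hα.le).symm
    _ ≤ R * S := mul_le_mul hR hS hp0.le hR0.le
  have hhalf : Real.sqrt α / 2 ≤ Real.sqrt (α/2) := by
    rw [Real.le_sqrt (by positivity) (by positivity)]
    rw [div_pow, Real.sq_sqrt hα.le]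
    nlinarith
  have hAR : |A - R| ≤ ε / Real.sqrt α := sqrt_diff hα (by linarith) hr har
  have hBS : |B - S| ≤ ε / Real.sqrt α := sqrt_diff hα (by linarith) hs hbs
  have hsqα : Real.sqrt α * Real.sqrt α = α := Real.mul_self_sqrt hα.le
  have key : u' / (A*B) - u / (R*S)
      = (u' - u)/(A*B) + u*((R-A)*S)/((A*B)*(R*S)) + u*(A*(S-B))/((A*B)*(R*S)) := by
    field_simp
    ring
  rw [key]
  have t1 : |(u' - u)/(A*B)| ≤ 2/α * δ := by
    rw [abs_div, abs_of_pos (by positivity : (0:ℝ) < A*B)]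
    calc |u' - u| / (A*B) ≤ δ / (α/2) :=
      div_le_div₀ hδ hu hα2 hAB
    _ = 2/α * δ := by field_simp
  have t2 : |u*((R-A)*S)/((A*B)*(R*S))| ≤ 2*ε/α^2 * γ := by
    rw [abs_div, abs_of_pos (by positivity : (0:ℝ) < (A*B)*(R*S)), abs_mul, abs_mul]
    have hnum : |u| * (|R - A| * |S|) ≤ γ * ((ε / Real.sqrt α) * S) := by
      have : |R - A| = |A - R| := abs_sub_comm _ _
      rw [this, abs_of_pos hS0]
      exact mul_le_mul huγ (mul_le_mul hAR le_rfl hS0.le (by positivity)) (by positivity) hγ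
    calc |u| * (|R - A| * |S|) / ((A*B)*(R*S))
        ≤ (γ * ((ε / Real.sqrt α) * S)) / ((A*B)*(R*S)) :=
          div_le_div₀ (by positivity) hnum (by positivity) le_rfl
    _ = (γ * (ε / Real.sqrt α)) / ((A*B)*R) := by
        field_simp
    _ ≤ (γ * (ε / Real.sqrt α)) / ((α/2) * Real.sqrt α) := by
        apply div_le_div₀ (by positivity) le_rfl (by positivity)
        exact mul_le_mul hAB hR hp0.le (by positivity)
    _ = 2*ε*γ/(α*(Real.sqrt α * Real.sqrt α)) := by
        field_simp
    _ = 2*ε/α^2 * γ := by rw [hsqα, pow_two]; ring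
  have t3 : |u*(A*(S-B))/((A*B)*(R*S))| ≤ 2*ε/α^2 * γ := by
    rw [abs_div, abs_of_pos (by positivity : (0:ℝ) < (A*B)*(R*S)), abs_mul, abs_mul]
    have h1 : |S - B| = |B - S| := abs_sub_comm _ _
    have hnum : |u| * (|A| * |S - B|) ≤ γ * (A * (ε / Real.sqrt α)) := by
      rw [h1, abs_of_pos hA0]
      exact mul_le_mul huγ (mul_le_mul le_rfl hBS (abs_nonneg _) hA0.le) (by positivity) hγ
    calc |u| * (|A| * |S - B|) / ((A*B)*(R*S))
        ≤ (γ * (A * (ε / Real.sqrt α))) / ((A*B)*(R*S)) :=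
          div_le_div₀ (by positivity) hnum (by positivity) le_rfl
    _ = (γ * (ε / Real.sqrt α)) / (B*(R*S)) := by
        field_simp
    _ ≤ (γ * (ε / Real.sqrt α)) / ((Real.sqrt α / 2) * α) := by
        apply div_le_div₀ (by positivity) le_rfl (by positivity)
        exact mul_le_mul (le_trans hhalf hB) hRS hα.le hB0.le
    _ = 2*ε*γ/((Real.sqrt α * Real.sqrt α)*α) := by
        field_simp
    _ = 2*ε/α^2 * γ := by rw [hsqα, pow_two]; ring
  calc |(u' - u)/(A*B) + u*((R-A)*S)/((A*B)*(R*S)) + u*(A*(S-B))/((A*B)*(R*S))|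
      ≤ |(u' - u)/(A*B) + u*((R-A)*S)/((A*B)*(R*S))| + |u*(A*(S-B))/((A*B)*(R*S))| := abs_add_le _ _
  _ ≤ |(u' - u)/(A*B)| + |u*((R-A)*S)/((A*B)*(R*S))| + |u*(A*(S-B))/((A*B)*(R*S))| := by
      have := abs_add_le ((u' - u)/(A*B)) (u*((R-A)*S)/((A*B)*(R*S)))
      linarith
  _ ≤ 2/α * δ + 2*ε/α^2 * γ + 2*ε/α^2 * γ := by linarith
  _ = 2/α * δ + 4*ε/α^2 * γ := by ring


lemma entry_le_maxNorm {M : ℕ} (A : Matrix (Fin M) (Fin M) ℂ) (i j : Fin M) :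
    ‖A i j‖ ≤ maxNorm A := by
  have : Nonempty (Fin M) := ⟨i⟩
  calc ‖A i j‖ ≤ ⨆ j, ‖A i j‖ :=
        le_ciSup (f := fun j => ‖A i j‖)
          (Set.Finite.bddAbove (Set.finite_range _)) j
  _ ≤ maxNorm A := le_ciSup (f := fun i => ⨆ j, ‖A i j‖)
        (Set.Finite.bddAbove (Set.finite_range _)) i

lemma frobNorm_nonneg {M : ℕ} (A : Matrix (Fin M) (Fin M) ℂ) : 0 ≤ frobNorm A :=
  Real.sqrt_nonneg _

lemma frob_eq_norm {M : ℕ} (A : Matrix (Fin M) (Fin M) ℂ)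
    (x : EuclideanSpace ℝ (Fin M × Fin M)) (hx : ∀ p, x p = ‖A p.1 p.2‖) :
    frobNorm A = ‖x‖ := by
  rw [EuclideanSpace.norm_eq, frobNorm, Fintype.sum_prod_type]
  congr 1
  apply Finset.sum_congr rfl
  intro i _
  apply Finset.sum_congr rfl
  intro j _
  rw [hx (i, j), Real.norm_eq_abs, sq_abs]

lemma frob_minkowski {M : ℕ} (E D C : Matrix (Fin M) (Fin M) ℂ) (u v : ℝ)
    (hu : 0 ≤ u) (hv : 0 ≤ v)
    (h : ∀ i j, ‖E i j‖ ≤ u * ‖D i j‖ + v * ‖C i j‖) :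
    frobNorm E ≤ u * frobNorm D + v * frobNorm C := by
  set vE : EuclideanSpace ℝ (Fin M × Fin M) := WithLp.toLp 2 (fun p => ‖E p.1 p.2‖) with hvE
  set vD : EuclideanSpace ℝ (Fin M × Fin M) := WithLp.toLp 2 (fun p => ‖D p.1 p.2‖) with hvD
  set vC : EuclideanSpace ℝ (Fin M × Fin M) := WithLp.toLp 2 (fun p => ‖C p.1 p.2‖) with hvC
  have h1 : frobNorm E = ‖vE‖ := frob_eq_norm E vE (fun p => rfl)
  have h2 : frobNorm D = ‖vD‖ := frob_eq_norm D vD (fun p => rfl)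
  have h3 : frobNorm C = ‖vC‖ := frob_eq_norm C vC (fun p => rfl)
  rw [h1, h2, h3]
  have hle : ‖vE‖ ≤ ‖u • vD + v • vC‖ := by
    rw [EuclideanSpace.norm_eq, EuclideanSpace.norm_eq]
    apply Real.sqrt_le_sqrt
    apply Finset.sum_le_sum
    intro p _
    have hpt : vE p ≤ (u • vD + v • vC) p := by
      have := h p.1 p.2
      simp only [hvE, hvD, hvC, PiLp.add_apply, PiLp.smul_apply, PiLp.toLp_apply, smul_eq_mul]
      exact this
    have h0 : 0 ≤ vE p := by simp [hvE]
    rw [Real.norm_eq_abs, Real.norm_eq_abs, sq_abs, sq_abs]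
    nlinarith
  calc ‖vE‖ ≤ ‖u • vD + v • vC‖ := hle
  _ ≤ ‖u • vD‖ + ‖v • vC‖ := norm_add_le _ _
  _ = u * ‖vD‖ + v * ‖vC‖ := by
      rw [norm_smul, norm_smul, Real.norm_eq_abs, Real.norm_eq_abs,
        abs_of_nonneg hu, abs_of_nonneg hv]

lemma arcsineMap_diag {M : ℕ} (C : Matrix (Fin M) (Fin M) ℂ) (hC : C.IsHermitian)
    (i : Fin M) (hpos : 0 < (C i i).re) : arcsineMap C i i = 1 := by
  have him : (C i i).im = 0 := by
    have h := hC.apply i i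
    have h2 := congrArg Complex.im h
    simp only [Complex.star_def, Complex.conj_im] at h2
    linarith
  have hre : (C i i).re / (Real.sqrt (C i i).re * Real.sqrt (C i i).re) = 1 := by
    rw [Real.mul_self_sqrt hpos.le]
    field_simp
  simp only [arcsineMap, Matrix.of_apply]
  rw [hre, him]
  simp only [zero_div, Real.arcsin_zero, Complex.ofReal_zero, mul_zero, add_zero,
    Real.arcsin_one]
  rw [← Complex.ofReal_mul]
  have hπ : (2 / Real.pi) * (Real.pi / 2) = 1 := by
    field_simp
  rw [hπ]
  simp

lemma normalized_entry {M : ℕ} (C : Matrix (Fin M) (Fin M) ℂ) (i j : Fin M)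
    (hp : 0 < (C i i).re) (hq : 0 < (C j j).re) :
    ((dInvSqrt C * C * dInvSqrt C) i j).re
        = (C i j).re / (Real.sqrt (C i i).re * Real.sqrt (C j j).re)
    ∧ ((dInvSqrt C * C * dInvSqrt C) i j).im
        = (C i j).im / (Real.sqrt (C i i).re * Real.sqrt (C j j).re) := by
  have hp' : (0:ℝ) < Real.sqrt (C i i).re := Real.sqrt_pos.2 hp
  have hq' : (0:ℝ) < Real.sqrt (C j j).re := Real.sqrt_pos.2 hq
  have hent : (dInvSqrt C * C * dInvSqrt C) i j
      = (((Real.sqrt (C i i).re)⁻¹ : ℝ) : ℂ) * C i j * (((Real.sqrt (C j j).re)⁻¹ : ℝ) : ℂ) := by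
    simp [dInvSqrt, Matrix.mul_diagonal, Matrix.diagonal_mul]
  constructor
  · rw [hent]
    simp only [Complex.mul_re, Complex.mul_im, Complex.ofReal_re, Complex.ofReal_im, mul_zero, zero_mul, sub_zero, add_zero]
    field_simp
  · rw [hent]
    simp only [Complex.mul_re, Complex.mul_im, Complex.ofReal_re, Complex.ofReal_im, mul_zero, zero_mul, sub_zero, add_zero]
    field_simp
    simp

/-- Frobenius-norm stability of the arcsine-law map. -/
theorem stmt10 :
    ∃ K : ℝ, 0 < K ∧
      ∀ (M : ℕ) (α β epsInf epsF : ℝ), 0 < α → β ∈ Set.Ioo (0:ℝ) 1 → 0 < epsInf → 0 < epsF →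
      ∀ (C Chat : Matrix (Fin M) (Fin M) ℂ), C.IsHermitian → Chat.IsHermitian →
      (∀ i, α ≤ (C i i).re) → (∀ i, α / 2 ≤ (Chat i i).re) →
      (∀ i j, i ≠ j → ‖(dInvSqrt C * C * dInvSqrt C) i j‖ ≤ 1 - β/2) →
      (∀ i j, i ≠ j → ‖(dInvSqrt Chat * Chat * dInvSqrt Chat) i j‖ ≤ 1 - β/2) →
      maxNorm (Chat - C) ≤ epsInf → frobNorm (Chat - C) ≤ epsF →
      frobNorm (arcsineMap Chat - arcsineMap C)
        ≤ K * (Real.sqrt β)⁻¹ *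
            ((α ^ 2)⁻¹ * frobNorm C * epsInf + ((α ^ 2)⁻¹ * epsInf + α⁻¹) * epsF) := by
  refine ⟨16, by norm_num, ?_⟩
  intro M α β epsInf epsF hα hβ hεI hεF C Chat hC hChat hCd hChatd hCn hChatn hmax hfrob
  obtain ⟨hβ0, hβ1⟩ := hβ
  have hsβ : 0 < Real.sqrt β := Real.sqrt_pos.2 hβ0
  set u : ℝ := 8 / (α * Real.sqrt β) with hu'
  set v : ℝ := 16 * epsInf / (α^2 * Real.sqrt β) with hv'
  have hu0 : 0 ≤ u := by positivity
  have hv0 : 0 ≤ v := by positivity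
  have hptw : ∀ i j, ‖(arcsineMap Chat - arcsineMap C) i j‖
      ≤ u * ‖(Chat - C) i j‖ + v * ‖C i j‖ := by
    intro i j
    by_cases hij : i = j
    · subst hij
      have h1 : arcsineMap Chat i i = 1 := arcsineMap_diag Chat hChat i (by linarith [hChatd i])
      have h2 : arcsineMap C i i = 1 := arcsineMap_diag C hC i (by linarith [hCd i])
      rw [Matrix.sub_apply, h1, h2, sub_self]
      simp only [norm_zero]
      positivity
    · set δ := ‖(Chat - C) i j‖ with hδ'
      set γ := ‖C i j‖ with hγ'
      set x := (C i j).re / (Real.sqrt (C i i).re * Real.sqrt (C j j).re) with hx'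
      set y := (C i j).im / (Real.sqrt (C i i).re * Real.sqrt (C j j).re) with hy'
      set xh := (Chat i j).re / (Real.sqrt (Chat i i).re * Real.sqrt (Chat j j).re) with hxh'
      set yh := (Chat i j).im / (Real.sqrt (Chat i i).re * Real.sqrt (Chat j j).re) with hyh'
      have hCii : 0 < (C i i).re := lt_of_lt_of_le hα (hCd i)
      have hCjj : 0 < (C j j).re := lt_of_lt_of_le hα (hCd j)
      have hChii : 0 < (Chat i i).re := lt_of_lt_of_le (by linarith) (hChatd i)
      have hChjj : 0 < (Chat j j).re := lt_of_lt_of_le (by linarith) (hChatd j)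
      have hnC := normalized_entry C i j hCii hCjj
      have hnCh := normalized_entry Chat i j hChii hChjj
      have hxb : |x| ≤ 1 - β/2 := by
        rw [hx', ← hnC.1]; exact le_trans (Complex.abs_re_le_norm _) (hCn i j hij)
      have hyb : |y| ≤ 1 - β/2 := by
        rw [hy', ← hnC.2]; exact le_trans (Complex.abs_im_le_norm _) (hCn i j hij)
      have hxhb : |xh| ≤ 1 - β/2 := by
        rw [hxh', ← hnCh.1]; exact le_trans (Complex.abs_re_le_norm _) (hChatn i j hij)
      have hyhb : |yh| ≤ 1 - β/2 := by
        rw [hyh', ← hnCh.2]; exact le_trans (Complex.abs_im_le_norm _) (hChatn i j hij)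
      have hdd : ∀ k, |(Chat k k).re - (C k k).re| ≤ epsInf := by
        intro k
        have h1 : ((Chat - C) k k).re = (Chat k k).re - (C k k).re := by
          simp [Matrix.sub_apply]
        rw [← h1]
        exact le_trans (Complex.abs_re_le_norm _) (le_trans (entry_le_maxNorm _ k k) hmax)
      have hre_sub : |(Chat i j).re - (C i j).re| ≤ δ := by
        have h1 : ((Chat - C) i j).re = (Chat i j).re - (C i j).re := by
          simp [Matrix.sub_apply]
        rw [hδ', ← h1]; exact Complex.abs_re_le_norm _
      have him_sub : |(Chat i j).im - (C i j).im| ≤ δ := by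
        have h1 : ((Chat - C) i j).im = (Chat i j).im - (C i j).im := by
          simp [Matrix.sub_apply]
        rw [hδ', ← h1]; exact Complex.abs_im_le_norm _
      have hreγ : |(C i j).re| ≤ γ := Complex.abs_re_le_norm _
      have himγ : |(C i j).im| ≤ γ := Complex.abs_im_le_norm _
      have hΔx : |xh - x| ≤ 2/α*δ + 4*epsInf/α^2*γ :=
        ratio_diff hα (hChatd i) (hChatd j) (hCd i) (hCd j) (hdd i) (hdd j) hre_sub hreγ hεI.le
      have hΔy : |yh - y| ≤ 2/α*δ + 4*epsInf/α^2*γ :=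
        ratio_diff hα (hChatd i) (hChatd j) (hCd i) (hCd j) (hdd i) (hdd j) him_sub himγ hεI.le
      have harcx : |Real.arcsin xh - Real.arcsin x| ≤ (2/Real.sqrt β) * |xh - x| :=
        arcsin_lip hβ0 hβ1 hxhb hxb
      have harcy : |Real.arcsin yh - Real.arcsin y| ≤ (2/Real.sqrt β) * |yh - y| :=
        arcsin_lip hβ0 hβ1 hyhb hyb
      have hdiff : (arcsineMap Chat - arcsineMap C) i j
          = ((2/Real.pi : ℝ):ℂ) * (((Real.arcsin xh - Real.arcsin x : ℝ):ℂ)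
              + Complex.I * ((Real.arcsin yh - Real.arcsin y : ℝ):ℂ)) := by
        simp only [Matrix.sub_apply, arcsineMap, Matrix.of_apply, hx', hy', hxh', hyh']
        push_cast
        ring
      have habs : ‖(arcsineMap Chat - arcsineMap C) i j‖
          ≤ |Real.arcsin xh - Real.arcsin x| + |Real.arcsin yh - Real.arcsin y| := by
        rw [hdiff, norm_mul]
        have h2π0 : 0 < 2 / Real.pi := by positivity
        have h2π : ‖((2/Real.pi : ℝ):ℂ)‖ ≤ 1 := by
          rw [Complex.norm_real, Real.norm_eq_abs, abs_of_pos h2π0, div_le_one Real.pi_pos]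
          linarith [Real.pi_gt_three]
        have htr : ‖((Real.arcsin xh - Real.arcsin x : ℝ):ℂ)
              + Complex.I * ((Real.arcsin yh - Real.arcsin y : ℝ):ℂ)‖
            ≤ |Real.arcsin xh - Real.arcsin x| + |Real.arcsin yh - Real.arcsin y| := by
          refine le_trans (norm_add_le _ _) ?_
          rw [norm_mul, Complex.norm_I, one_mul, Complex.norm_real, Complex.norm_real, Real.norm_eq_abs, Real.norm_eq_abs]
        calc ‖((2/Real.pi : ℝ):ℂ)‖ * ‖((Real.arcsin xh - Real.arcsin x : ℝ):ℂ)
              + Complex.I * ((Real.arcsin yh - Real.arcsin y : ℝ):ℂ)‖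
            ≤ 1 * (|Real.arcsin xh - Real.arcsin x| + |Real.arcsin yh - Real.arcsin y|) :=
              mul_le_mul h2π htr (by positivity) one_pos.le
        _ = |Real.arcsin xh - Real.arcsin x| + |Real.arcsin yh - Real.arcsin y| := one_mul _
      have key : (2/Real.sqrt β) * (2/α*δ + 4*epsInf/α^2*γ)
            + (2/Real.sqrt β) * (2/α*δ + 4*epsInf/α^2*γ) = u * δ + v * γ := by
        rw [hu', hv']
        field_simp
        ring
      have hcomb : |Real.arcsin xh - Real.arcsin x| + |Real.arcsin yh - Real.arcsin y|
          ≤ u * δ + v * γ := by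
        calc |Real.arcsin xh - Real.arcsin x| + |Real.arcsin yh - Real.arcsin y|
            ≤ (2/Real.sqrt β) * |xh - x| + (2/Real.sqrt β) * |yh - y| := add_le_add harcx harcy
        _ ≤ (2/Real.sqrt β) * (2/α*δ + 4*epsInf/α^2*γ)
            + (2/Real.sqrt β) * (2/α*δ + 4*epsInf/α^2*γ) :=
            add_le_add (mul_le_mul_of_nonneg_left hΔx (by positivity))
              (mul_le_mul_of_nonneg_left hΔy (by positivity))
        _ = u * δ + v * γ := key
      linarith [habs, hcomb]
  have hmink := frob_minkowski _ _ _ u v hu0 hv0 hptw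
  have hfrobC : 0 ≤ frobNorm C := frobNorm_nonneg C
  have hstep : u * frobNorm (Chat - C) ≤ u * epsF := mul_le_mul_of_nonneg_left hfrob hu0
  have hkey : 16 * (Real.sqrt β)⁻¹ *
        ((α ^ 2)⁻¹ * frobNorm C * epsInf + ((α ^ 2)⁻¹ * epsInf + α⁻¹) * epsF)
      - (u * epsF + v * frobNorm C)
      = 16*epsInf*epsF/(α^2*Real.sqrt β) + 8*epsF/(α*Real.sqrt β) := by
    rw [hu', hv']
    field_simp
    ring
  have hpos2 : 0 ≤ 16*epsInf*epsF/(α^2*Real.sqrt β) + 8*epsF/(α*Real.sqrt β) := by positivity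
  linarith [hmink]

end
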